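/- If μ satisfies the β-margin condition with constant C and η is (α,L)-smooth, then the effective boundary satisfies μ(∂_{p,Δ}) ≤ C·(Δ + L·p^α)^β for all p ∈ (0,1) and Δ > 0. -/

import Mathlib

open MeasureTheory Metric Set

/-- Conditional mean of `η` over a set `S` under `μ`. -/
noncomputable def condMean {X : Type*} [MeasurableSpace X]
    (μ : Measure X) (η : X → ℝ) (S : Set X) : ℝ :=
  (∫ y in S, η y ∂μ) / (μ S).toReal

/-- Probability radius `r(x;p)`. -/
noncomputable def probRadius {X : Type*} [MetricSpace X] [MeasurableSpace X]
    (μ : Measure X) (x : X) (p : ℝ) : ℝ :=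
  sInf {r : ℝ | p ≤ (μ (closedBall x r)).toReal}

/-- `(α, L)`-smoothness of the conditional probability function. -/
def SmoothCond {X : Type*} [MetricSpace X] [MeasurableSpace X]
    (μ : Measure X) (η : X → ℝ) (α L : ℝ) : Prop :=
  ∀ x x' : X, |η x - η x'| ≤ L * (μ (ball x (dist x x'))).toReal ^ α

/-- The positive part of the effective interior. -/
def effIntPlus {X : Type*} [MetricSpace X] [MeasurableSpace X]
    (μ : Measure X) (η : X → ℝ) (p Δ : ℝ) : Set X :=
  {x | 1/2 < η x ∧ ∀ r, 0 < r → r ≤ probRadius μ x p →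
    Δ ≤ condMean μ η (closedBall x r) - 1/2}

/-- The negative part of the effective interior. -/
def effIntMinus {X : Type*} [MetricSpace X] [MeasurableSpace X]
    (μ : Measure X) (η : X → ℝ) (p Δ : ℝ) : Set X :=
  {x | η x < 1/2 ∧ ∀ r, 0 < r → r ≤ probRadius μ x p →
    Δ ≤ 1/2 - condMean μ η (closedBall x r)}

/-- The effective decision boundary. -/
def effBoundary {X : Type*} [MetricSpace X] [MeasurableSpace X]
    (μ : Measure X) (η : X → ℝ) (p Δ : ℝ) : Set X :=
  (effIntPlus μ η p Δ ∪ effIntMinus μ η p Δ)ᶜ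

/-- If `r ≤ probRadius μ x p`, then the open ball of radius `r` has measure at most `p`. -/
lemma measure_ball_le_of_le_probRadius {X : Type*} [MetricSpace X] [MeasurableSpace X]
    (μ : Measure X) [IsProbabilityMeasure μ] (x : X) (p r : ℝ) (hp : 0 < p)
    (hr : 0 < r) (hrle : r ≤ probRadius μ x p) :
    (μ (ball x r)).toReal ≤ p := by
  have hbdd : BddBelow {r : ℝ | p ≤ (μ (closedBall x r)).toReal} := by
    refine ⟨0, fun s hs => ?_⟩
    by_contra hneg
    push_neg at hneg
    rw [mem_setOf_eq, closedBall_eq_empty.2 hneg] at hs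
    simp at hs
    linarith
  have hlt : ∀ r' : ℝ, r' < r → (μ (closedBall x r')).toReal < p := by
    intro r' hr'
    by_contra hge
    push_neg at hge
    have : probRadius μ x p ≤ r' := csInf_le hbdd hge
    linarith
  -- exhaust the open ball by closed balls of radius `r - r/(n+1)`
  set s : ℕ → ℝ := fun n => r - r / (n + 1) with hs
  have hsmono : Monotone s := by
    intro m n hmn
    have h1 : (0:ℝ) < m + 1 := by positivity
    have h2 : (0:ℝ) < n + 1 := by positivity
    have : r / (n + 1) ≤ r / (m + 1) := by
      apply div_le_div_of_nonneg_left hr.le h1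
      exact_mod_cast by exact_mod_cast Nat.succ_le_succ hmn
    simp only [hs]
    linarith
  have hslt : ∀ n, s n < r := by
    intro n
    have : 0 < r / ((n:ℝ) + 1) := by positivity
    simp only [hs]; linarith
  have hunion : ball x r = ⋃ n, closedBall x (s n) := by
    ext y
    simp only [mem_ball, mem_iUnion, mem_closedBall]
    constructor
    · intro hy
      have hd : 0 < r - dist y x := by rw [dist_comm]; linarith [dist_comm y x ▸ hy]
      obtain ⟨n, hn⟩ := exists_nat_gt (r / (r - dist y x))
      refine ⟨n, ?_⟩
      have hn1 : r / (r - dist y x) < (n:ℝ) + 1 := by linarith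
      have : r / ((n:ℝ) + 1) < r - dist y x := by
        rw [div_lt_iff₀ (by positivity : (0:ℝ) < (n:ℝ) + 1)]
        have h2 := (div_lt_iff₀ hd).1 hn1
        nlinarith
      simp only [hs]; linarith
    · intro ⟨n, hn⟩
      exact lt_of_le_of_lt hn (hslt n)
  have hdir : Directed (· ⊆ ·) (fun n => closedBall x (s n)) :=
    Monotone.directed_le (fun m n h => closedBall_subset_closedBall (hsmono h))
  have hmeq : μ (ball x r) = ⨆ n, μ (closedBall x (s n)) := by
    rw [hunion]; exact hdir.measure_iUnion
  have hle : μ (ball x r) ≤ ENNReal.ofReal p := by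
    rw [hmeq]
    refine iSup_le fun n => ?_
    rw [ENNReal.le_ofReal_iff_toReal_le (measure_ne_top μ _) hp.le]
    exact (hlt (s n) (hslt n)).le
  calc (μ (ball x r)).toReal ≤ (ENNReal.ofReal p).toReal :=
        ENNReal.toReal_mono ENNReal.ofReal_ne_top hle
    _ = p := ENNReal.toReal_ofReal hp.le

/-- The conditional mean over a closed ball of admissible radius is within `L p^α` of `η x`. -/
lemma condMean_close {X : Type*} [MetricSpace X] [MeasurableSpace X] [BorelSpace X]
    (μ : Measure X) [IsProbabilityMeasure μ] [μ.IsOpenPosMeasure]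
    (η : X → ℝ) (hmeas : Measurable η) (hrange : ∀ x, η x ∈ Set.Icc (0:ℝ) 1)
    (α L : ℝ) (hα : 0 < α) (hL : 0 < L) (hsmooth : SmoothCond μ η α L)
    (p : ℝ) (hp : 0 < p) (x : X) (r : ℝ) (hr : 0 < r) (hrle : r ≤ probRadius μ x p) :
    |condMean μ η (closedBall x r) - η x| ≤ L * p ^ α := by
  set B := closedBall x r with hB
  have hμball : 0 < μ (ball x r) := isOpen_ball.measure_pos μ (nonempty_ball.2 hr)
  have hμB : 0 < (μ B).toReal := by
    refine ENNReal.toReal_pos ?_ (measure_ne_top μ B)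
    exact (lt_of_lt_of_le hμball (measure_mono ball_subset_closedBall)).ne'
  have hint : IntegrableOn η B μ := by
    have hI : Integrable η μ := by
      refine ⟨hmeas.aestronglyMeasurable, ?_⟩
      apply MeasureTheory.HasFiniteIntegral.of_bounded (C := 1)
      filter_upwards with y
      have h := hrange y
      rw [Real.norm_eq_abs, abs_le]
      exact ⟨by linarith [h.1], h.2⟩
    exact hI.integrableOn
  have hbound : ∀ y ∈ B, |η x - η y| ≤ L * p ^ α := by
    intro y hy
    have h1 : |η x - η y| ≤ L * (μ (ball x (dist x y))).toReal ^ α := hsmooth x y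
    have h2 : (μ (ball x (dist x y))).toReal ≤ p := by
      calc (μ (ball x (dist x y))).toReal ≤ (μ (ball x r)).toReal := by
            apply ENNReal.toReal_mono (measure_ne_top μ _)
            exact measure_mono (ball_subset_ball (mem_closedBall'.1 hy))
        _ ≤ p := measure_ball_le_of_le_probRadius μ x p r hp hr hrle
    calc |η x - η y| ≤ L * (μ (ball x (dist x y))).toReal ^ α := h1
      _ ≤ L * p ^ α := by
          apply mul_le_mul_of_nonneg_left _ hL.le
          exact Real.rpow_le_rpow ENNReal.toReal_nonneg h2 hα.le
  have hlow : (η x - L * p ^ α) * (μ B).toReal ≤ ∫ y in B, η y ∂μ := by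
    have := setIntegral_mono_on (f := fun _ => η x - L * p ^ α) (g := η)
      (integrableOn_const (measure_lt_top μ B).ne)
      hint measurableSet_closedBall
      (fun y hy => by
        have h := (abs_le.1 (hbound y hy)).2
        show _ ≤ _
        linarith)
    rwa [setIntegral_const, smul_eq_mul, mul_comm] at this
  have hhigh : ∫ y in B, η y ∂μ ≤ (η x + L * p ^ α) * (μ B).toReal := by
    have := setIntegral_mono_on (f := η) (g := fun _ => η x + L * p ^ α) hint
      (integrableOn_const (measure_lt_top μ B).ne)
      measurableSet_closedBall
      (fun y hy => by
        have h := (abs_le.1 (hbound y hy)).1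
        show _ ≤ _
        linarith)
    rwa [setIntegral_const, smul_eq_mul, mul_comm] at this
  rw [abs_le]
  constructor
  · rw [condMean, neg_le, neg_sub]
    have : η x - L * p ^ α ≤ (∫ y in B, η y ∂μ) / (μ B).toReal :=
      (le_div_iff₀ hμB).2 hlow
    linarith
  · rw [condMean]
    have : (∫ y in B, η y ∂μ) / (μ B).toReal ≤ η x + L * p ^ α :=
      (div_le_iff₀ hμB).2 hhigh
    linarith

/-- Under the β-margin condition and (α,L)-smoothness, the measure of the effective boundary is
bounded by C(Δ + L p^α)^β. -/
theorem stmt10 {X : Type*} [MetricSpace X] [MeasurableSpace X] [BorelSpace X]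
    (μ : Measure X) [IsProbabilityMeasure μ] [μ.IsOpenPosMeasure]
    (η : X → ℝ) (hmeas : Measurable η) (hrange : ∀ x, η x ∈ Set.Icc (0:ℝ) 1)
    (α L : ℝ) (hα : 0 < α) (hL : 0 < L) (hsmooth : SmoothCond μ η α L)
    (C β : ℝ) (hC : 0 < C) (hβ : 0 < β)
    (hmargin : ∀ t : ℝ, 0 ≤ t → (μ {x | |η x - 1/2| ≤ t}).toReal ≤ C * t ^ β)
    (p Δ : ℝ) (hp : p ∈ Set.Ioo (0:ℝ) 1) (hΔ : 0 < Δ) :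
    (μ (effBoundary μ η p Δ)).toReal ≤ C * (Δ + L * p ^ α) ^ β := by
  set t := Δ + L * p ^ α with ht
  have htpos : 0 < t := add_pos hΔ (mul_pos hL (Real.rpow_pos_of_pos hp.1 α))
  have hsub : effBoundary μ η p Δ ⊆ {x | |η x - 1/2| ≤ t} := by
    intro x hx
    by_contra h
    simp only [mem_setOf_eq, not_le] at h
    apply hx
    rcases lt_abs.1 h with h' | h'
    · left
      refine ⟨by linarith, fun r hr hrle => ?_⟩
      have hc := abs_le.1 (condMean_close μ η hmeas hrange α L hα hL hsmooth p hp.1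
        x r hr hrle)
      linarith [hc.1]
    · right
      refine ⟨by linarith, fun r hr hrle => ?_⟩
      have hc := abs_le.1 (condMean_close μ η hmeas hrange α L hα hL hsmooth p hp.1
        x r hr hrle)
      linarith [hc.2]
  calc (μ (effBoundary μ η p Δ)).toReal
      ≤ (μ {x | |η x - 1/2| ≤ t}).toReal :=
        ENNReal.toReal_mono (measure_ne_top μ _) (measure_mono hsub)
    _ ≤ C * t ^ β := hmargin t htpos.le
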